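/- Let Z be a real-valued random variable on a probability space, define P(x) := P(Z ≥ x) and P(x⁺) := P(Z > x) for x ∈ ℝ, and let V be uniformly distributed on [0,1] and independent of Z. Then the random variable W := P(Z) − V·(P(Z) − P(Z⁺)) (that is, W(ω) = P(z) − V(ω)(P(z) − P(z⁺)) evaluated at z = Z(ω)) is uniformly distributed on [0,1]. -/

import Mathlib

open MeasureTheory ProbabilityTheory Filter
open scoped ENNReal

open Set in
noncomputable def dtF (ν : Measure ℝ) (z : ℝ) : ℝ := (ν (Ici z)).toReal

open Set in
noncomputable def dtG (ν : Measure ℝ) (z : ℝ) : ℝ := (ν (Ioi z)).toReal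

noncomputable def dtH (ν : Measure ℝ) (t z : ℝ) : ℝ :=
  if dtF ν z ≤ t then 1 else max 0 ((t - dtG ν z) / (dtF ν z - dtG ν z))

lemma ofReal_max_zero (x : ℝ) : ENNReal.ofReal (max 0 x) = ENNReal.ofReal x := by
  rcases le_total x 0 with h | h
  · rw [max_eq_left h, ENNReal.ofReal_zero, ENNReal.ofReal_of_nonpos h]
  · rw [max_eq_right h]

section aux
open Set
variable (ν : Measure ℝ) [IsFiniteMeasure ν]

lemma dtG_le_dtF (z : ℝ) : dtG ν z ≤ dtF ν z :=
  ENNReal.toReal_mono (measure_ne_top _ _) (measure_mono Ioi_subset_Ici_self)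

lemma dtG_nonneg (z : ℝ) : 0 ≤ dtG ν z := ENNReal.toReal_nonneg

lemma dtF_nonneg (z : ℝ) : 0 ≤ dtF ν z := ENNReal.toReal_nonneg

lemma dtF_antitone : Antitone (dtF ν) := fun a b hab =>
  ENNReal.toReal_mono (measure_ne_top _ _) (measure_mono (Ici_subset_Ici.2 hab))

lemma dtG_antitone : Antitone (dtG ν) := fun a b hab =>
  ENNReal.toReal_mono (measure_ne_top _ _) (measure_mono (Ioi_subset_Ioi hab))

lemma dtF_measurable : Measurable (dtF ν) := (dtF_antitone ν).measurable

lemma dtG_measurable : Measurable (dtG ν) := (dtG_antitone ν).measurable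

lemma dtH_nonneg (t z : ℝ) : 0 ≤ dtH ν t z := by
  unfold dtH; split <;> simp

/-- Key slice computation: for fixed `z`, the uniform measure of
`{v | F z - v (F z - G z) ≤ t}` equals `dtH ν t z`. -/
lemma dt_slice (t z : ℝ) :
    volume.restrict (Icc (0:ℝ) 1) {v : ℝ | dtF ν z - v * (dtF ν z - dtG ν z) ≤ t}
      = ENNReal.ofReal (dtH ν t z) := by
  set a := dtG ν z with ha
  set b := dtF ν z with hb
  have hab : a ≤ b := dtG_le_dtF ν z
  have ha0 : 0 ≤ a := dtG_nonneg ν z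
  have hmeas : MeasurableSet {v : ℝ | b - v * (b - a) ≤ t} :=
    measurableSet_le (by fun_prop) measurable_const
  rw [Measure.restrict_apply hmeas]
  by_cases hbt : b ≤ t
  · have hset : {v : ℝ | b - v * (b - a) ≤ t} ∩ Icc 0 1 = Icc 0 1 := by
      apply inter_eq_right.2
      intro v hv
      simp only [mem_setOf_eq]
      nlinarith [hv.1, hv.2]
    rw [hset, Real.volume_Icc, dtH, if_pos hbt]
    norm_num
  · push_neg at hbt
    rw [dtH, if_neg (not_le.2 hbt)]
    by_cases hba : a = b
    · have hset : {v : ℝ | b - v * (b - a) ≤ t} = ∅ := by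
        ext v
        simp only [mem_setOf_eq, mem_empty_iff_false, iff_false, not_le, hba, sub_self,
          mul_zero]
        linarith
      rw [hset, empty_inter, measure_empty, ← ha, ← hb, hba, sub_self, div_zero]
      simp
    · have hba' : a < b := lt_of_le_of_ne hab hba
      have hd : 0 < b - a := sub_pos.2 hba'
      set r := (b - t) / (b - a) with hr
      have hset : {v : ℝ | b - v * (b - a) ≤ t} = Ici r := by
        ext v
        simp only [mem_setOf_eq, mem_Ici, hr]
        rw [div_le_iff₀ hd]
        constructor <;> intro h <;> nlinarith
      have hr0 : 0 < r := div_pos (by linarith) hd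
      have hint : Ici r ∩ Icc (0:ℝ) 1 = Icc r 1 := by
        ext v
        simp only [mem_inter_iff, mem_Ici, mem_Icc]
        exact ⟨fun h => ⟨h.1, h.2.2⟩, fun h => ⟨h.1, le_trans hr0.le h.1, h.2⟩⟩
      rw [hset, hint, Real.volume_Icc, ← ha, ← hb, ofReal_max_zero]
      congr 1
      field_simp [hr]
      rw [sub_mul, hr, div_mul_cancel₀ _ (ne_of_gt hd)]
      ring

lemma dtF_le_one [IsProbabilityMeasure ν] (z : ℝ) : dtF ν z ≤ 1 := by
  rw [dtF, show (1:ℝ) = (ν univ).toReal by simp]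
  exact ENNReal.toReal_mono (measure_ne_top _ _) (measure_mono (subset_univ _))

lemma dtH_eq_zero' (t z : ℝ) (h1 : t < dtF ν z) (h2 : t ≤ dtG ν z) : dtH ν t z = 0 := by
  rw [dtH, if_neg (not_le.2 h1), max_eq_left]
  apply div_nonpos_of_nonpos_of_nonneg (by linarith) (by linarith [dtG_le_dtF ν z])

lemma dtH_eq_one (t z : ℝ) (h : dtF ν z ≤ t) : dtH ν t z = 1 := if_pos h

lemma dtF_next_le_dtG (z : ℝ) : dtF ν (z + 1) ≤ dtG ν z :=
  ENNReal.toReal_mono (measure_ne_top _ _)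
    (measure_mono (Ici_subset_Ioi.2 (by linarith)))

/-- Key integral computation. -/
lemma dt_integral [IsProbabilityMeasure ν] (t : ℝ) :
    ∫⁻ z, ENNReal.ofReal (dtH ν t z) ∂ν = volume.restrict (Icc (0:ℝ) 1) (Iic t) := by
  rw [Measure.restrict_apply measurableSet_Iic]
  rcases lt_or_ge t 0 with ht0 | ht0
  · -- `t < 0` : both sides vanish
    have h1 : ∀ z, dtH ν t z = 0 := fun z =>
      dtH_eq_zero' ν t z (lt_of_lt_of_le ht0 (dtF_nonneg ν z))
        (le_trans ht0.le (dtG_nonneg ν z))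
    simp only [h1, ENNReal.ofReal_zero, lintegral_zero]
    have hempty : Iic t ∩ Icc (0:ℝ) 1 = ∅ := by
      ext x
      simp only [mem_inter_iff, mem_Iic, mem_Icc, mem_empty_iff_false, iff_false, not_and]
      intro hx1 hx2
      linarith [hx2]
    rw [hempty, measure_empty]
  rcases le_or_gt 1 t with ht1 | ht1
  · -- `t ≥ 1` : both sides are one
    have h1 : ∀ z, dtH ν t z = 1 := fun z => dtH_eq_one ν t z (le_trans (dtF_le_one ν z) ht1)
    simp only [h1, ENNReal.ofReal_one, lintegral_one, measure_univ]
    have hall : Iic t ∩ Icc (0:ℝ) 1 = Icc 0 1 :=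
      inter_eq_right.2 (fun x hx => le_trans hx.2 ht1)
    rw [hall, Real.volume_Icc]
    norm_num
  · -- main case `0 ≤ t < 1`
    have hrhs : Iic t ∩ Icc (0:ℝ) 1 = Icc 0 t := by
      ext x
      simp only [mem_inter_iff, mem_Iic, mem_Icc]
      constructor
      · rintro ⟨hx1, hx2, _⟩; exact ⟨hx2, hx1⟩
      · rintro ⟨hx1, hx2⟩; exact ⟨hx2, hx1, by linarith⟩
    rw [hrhs, Real.volume_Icc, sub_zero]
    by_cases hS : {x : ℝ | dtF ν x ≤ t}.Nonempty
    · -- S nonempty: let c be its infimum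
      set S : Set ℝ := {x : ℝ | dtF ν x ≤ t} with hSdef
      -- S is bounded below
      have hUuniv : (⋃ n : ℕ, Ici (-(n:ℝ))) = (univ : Set ℝ) := by
        ext x
        simp only [mem_iUnion, mem_Ici, mem_univ, iff_true]
        obtain ⟨n, hn⟩ := exists_nat_gt (-x)
        exact ⟨n, by linarith⟩
      have hsup : ν (univ : Set ℝ) = ⨆ n : ℕ, ν (Ici (-(n:ℝ))) := by
        rw [← hUuniv]
        exact Monotone.measure_iUnion (fun n m hnm =>
          Ici_subset_Ici.2 (neg_le_neg (Nat.cast_le.2 hnm)))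
      have hbig : ∃ n : ℕ, t < dtF ν (-(n:ℝ)) := by
        by_contra h
        push_neg at h
        have hle : ∀ n : ℕ, ν (Ici (-(n:ℝ))) ≤ ENNReal.ofReal t := fun n =>
          (ENNReal.le_ofReal_iff_toReal_le (measure_ne_top _ _) ht0).2 (h n)
        have h1le : (1 : ℝ≥0∞) ≤ ENNReal.ofReal t := by
          rw [show (1:ℝ≥0∞) = ν univ by simp, hsup]
          exact iSup_le hle
        rw [ENNReal.one_le_ofReal] at h1le
        linarith
      obtain ⟨n₀, hn₀⟩ := hbig
      have hbdd : BddBelow S := by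
        refine ⟨-(n₀:ℝ), fun s hs => ?_⟩
        by_contra hcon
        push_neg at hcon
        exact absurd (le_trans (dtF_antitone ν hcon.le) hs) (not_le.2 hn₀)
      set c : ℝ := sInf S with hc
      have h1 : ∀ z, c < z → dtF ν z ≤ t := by
        intro z hz
        obtain ⟨s, hsS, hsz⟩ := exists_lt_of_csInf_lt hS hz
        exact le_trans (dtF_antitone ν hsz.le) hsS
      have h2 : ∀ z, z < c → t < dtF ν z := by
        intro z hz
        by_contra h
        push_neg at h
        exact absurd (csInf_le hbdd h) (not_le.2 hz)
      have h5 : ∀ z, z < c → t ≤ dtG ν z := by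
        intro z hz
        have hmid : (z + c) / 2 < c := by linarith
        have hmid2 : z < (z + c) / 2 := by linarith
        have : dtF ν ((z + c) / 2) ≤ dtG ν z :=
          ENNReal.toReal_mono (measure_ne_top _ _)
            (measure_mono (Ici_subset_Ioi.2 hmid2))
        linarith [h2 _ hmid]
      have h3 : t ≤ dtF ν c := by
        have hiInter : (⋂ n : ℕ, Ici (c - 1 / ((n:ℝ) + 1))) = Ici c := by
          ext x
          simp only [mem_iInter, mem_Ici]
          constructor
          · intro h
            by_contra hcon
            push_neg at hcon
            obtain ⟨n, hn⟩ := exists_nat_one_div_lt (sub_pos.2 hcon)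
            have := h n
            push_cast at hn ⊢
            linarith
          · intro h n
            have : (0:ℝ) < 1 / ((n:ℝ) + 1) := by positivity
            linarith
        have hanti : Antitone (fun n : ℕ => Ici (c - 1 / ((n:ℝ) + 1))) := by
          intro n m hnm
          apply Ici_subset_Ici.2
          have h1' : (0:ℝ) < (n:ℝ) + 1 := by positivity
          have h2' : ((n:ℝ) + 1) ≤ ((m:ℝ) + 1) := by
            push_cast
            exact add_le_add_left (Nat.cast_le.2 hnm) 1
          have := one_div_le_one_div_of_le h1' h2'
          linarith
        have hinf : ν (Ici c) = ⨅ n : ℕ, ν (Ici (c - 1 / ((n:ℝ) + 1))) := by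
          rw [← hiInter]
          exact hanti.measure_iInter
            (fun n => (measurableSet_Ici).nullMeasurableSet) ⟨0, measure_ne_top _ _⟩
        have hle : ENNReal.ofReal t ≤ ν (Ici c) := by
          rw [hinf]
          refine le_iInf fun n => ?_
          have hlt : c - 1 / ((n:ℝ) + 1) < c := by
            have : (0:ℝ) < 1 / ((n:ℝ) + 1) := by positivity
            linarith
          exact (ENNReal.ofReal_le_iff_le_toReal (measure_ne_top _ _)).2 (h2 _ hlt).le
        rw [ENNReal.ofReal_le_iff_le_toReal (measure_ne_top _ _)] at hle
        exact hle
      have h4 : dtG ν c ≤ t := by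
        have hiUnion : (⋃ n : ℕ, Ici (c + 1 / ((n:ℝ) + 1))) = Ioi c := by
          ext x
          simp only [mem_iUnion, mem_Ici, mem_Ioi]
          constructor
          · rintro ⟨n, hn⟩
            have : (0:ℝ) < 1 / ((n:ℝ) + 1) := by positivity
            linarith
          · intro h
            obtain ⟨n, hn⟩ := exists_nat_one_div_lt (sub_pos.2 h)
            exact ⟨n, by push_cast at hn ⊢; linarith⟩
        have hmono : Monotone (fun n : ℕ => Ici (c + 1 / ((n:ℝ) + 1))) := by
          intro n m hnm
          apply Ici_subset_Ici.2
          have h1' : (0:ℝ) < (n:ℝ) + 1 := by positivity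
          have h2' : ((n:ℝ) + 1) ≤ ((m:ℝ) + 1) := by
            push_cast
            exact add_le_add_left (Nat.cast_le.2 hnm) 1
          have := one_div_le_one_div_of_le h1' h2'
          linarith
        have hsup2 : ν (Ioi c) = ⨆ n : ℕ, ν (Ici (c + 1 / ((n:ℝ) + 1))) := by
          rw [← hiUnion]
          exact hmono.measure_iUnion
        have hle : ν (Ioi c) ≤ ENNReal.ofReal t := by
          rw [hsup2]
          refine iSup_le fun n => ?_
          have hlt : c < c + 1 / ((n:ℝ) + 1) := by
            have : (0:ℝ) < 1 / ((n:ℝ) + 1) := by positivity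
            linarith
          exact (ENNReal.le_ofReal_iff_toReal_le (measure_ne_top _ _) ht0).2 (h1 _ hlt)
        calc dtG ν c ≤ (ENNReal.ofReal t).toReal :=
              ENNReal.toReal_mono ENNReal.ofReal_ne_top hle
          _ = t := ENNReal.toReal_ofReal ht0
      -- pointwise decomposition of the integrand
      have hfun : ∀ z, ENNReal.ofReal (dtH ν t z)
          = Set.indicator (Ioi c) (fun _ => (1:ℝ≥0∞)) z
            + Set.indicator {c} (fun _ => ENNReal.ofReal (dtH ν t c)) z := by
        intro z
        rcases lt_trichotomy z c with h | h | h
        · rw [dtH_eq_zero' ν t z (h2 z h) (h5 z h),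
            Set.indicator_of_notMem (by simpa using not_lt.2 h.le),
            Set.indicator_of_notMem (by simpa using ne_of_lt h)]
          simp
        · subst h
          rw [Set.indicator_of_notMem (by simp)]
          simp [Set.indicator_of_mem]
        · rw [dtH_eq_one ν t z (h1 z h), Set.indicator_of_mem (mem_Ioi.2 h),
            Set.indicator_of_notMem (by simpa using ne_of_gt h)]
          simp
      rw [lintegral_congr hfun,
        lintegral_add_left (measurable_const.indicator measurableSet_Ioi),
        lintegral_indicator measurableSet_Ioi,
        lintegral_indicator (measurableSet_singleton c),
        setLIntegral_const, setLIntegral_const, one_mul]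
      -- measure arithmetic
      have hsplit : ν {c} + ν (Ioi c) = ν (Ici c) := by
        rw [← measure_union (by simp : Disjoint {c} (Ioi c)) measurableSet_Ioi,
          singleton_union, Ioi_insert]
      have hIoi : ν (Ioi c) = ENNReal.ofReal (dtG ν c) :=
        (ENNReal.ofReal_toReal (measure_ne_top _ _)).symm
      have hsing : ν {c} = ENNReal.ofReal (dtF ν c - dtG ν c) := by
        rw [ENNReal.ofReal_sub _ (dtG_nonneg ν c), dtF, dtG,
          ENNReal.ofReal_toReal (measure_ne_top _ _),
          ENNReal.ofReal_toReal (measure_ne_top _ _), ← hsplit,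
          ENNReal.add_sub_cancel_right (measure_ne_top _ _)]
      by_cases hc2 : dtF ν c ≤ t
      · have hceq : dtF ν c = t := le_antisymm hc2 h3
        rw [dtH_eq_one ν t c hc2, ENNReal.ofReal_one, one_mul, add_comm, hsplit,
          ← hceq, dtF, ENNReal.ofReal_toReal (measure_ne_top _ _)]
      · push_neg at hc2
        have hd : 0 < dtF ν c - dtG ν c := by linarith
        rw [dtH, if_neg (not_le.2 hc2),
          max_eq_right (div_nonneg (by linarith) hd.le), hsing, hIoi,
          ← ENNReal.ofReal_mul (div_nonneg (by linarith) hd.le),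
          div_mul_cancel₀ _ (ne_of_gt hd),
          ← ENNReal.ofReal_add (dtG_nonneg ν c) (by linarith)]
        congr 1
        ring
    · -- S empty
      have hall : ∀ z, t < dtF ν z := by
        intro z
        by_contra h
        push_neg at h
        exact hS ⟨z, h⟩
      have hG : ∀ z, t ≤ dtG ν z := fun z =>
        le_trans (hall (z + 1)).le (dtF_next_le_dtG ν z)
      have h0 : ∀ z, dtH ν t z = 0 := fun z => dtH_eq_zero' ν t z (hall z) (hG z)
      simp only [h0, ENNReal.ofReal_zero, lintegral_zero]
      -- show t = 0
      have hiInter : (⋂ n : ℕ, Ici ((n:ℝ))) = (∅ : Set ℝ) := by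
        ext x
        simp only [mem_iInter, mem_Ici, mem_empty_iff_false, iff_false, not_forall, not_le]
        obtain ⟨n, hn⟩ := exists_nat_gt x
        exact ⟨n, hn⟩
      have hanti : Antitone (fun n : ℕ => Ici ((n:ℝ))) := fun n m hnm =>
        Ici_subset_Ici.2 (Nat.cast_le.2 hnm)
      have hinf : (0:ℝ≥0∞) = ⨅ n : ℕ, ν (Ici ((n:ℝ))) := by
        rw [show (0:ℝ≥0∞) = ν (∅ : Set ℝ) by simp, ← hiInter]
        exact hanti.measure_iInter (fun n => measurableSet_Ici.nullMeasurableSet)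
          ⟨0, measure_ne_top _ _⟩
      have hle : ENNReal.ofReal t ≤ 0 := by
        rw [hinf]
        refine le_iInf fun n => ?_
        exact (ENNReal.ofReal_le_iff_le_toReal (measure_ne_top _ _)).2 (hall _).le
      have ht : t ≤ 0 := by
        have := le_antisymm hle zero_le
        rwa [ENNReal.ofReal_eq_zero] at this
      rw [ENNReal.ofReal_eq_zero.2 ht]

end aux

/-- **Distributional transform (key step of Lemma 4.9).** Let `P(x) = P(Z ≥ x)`
and `P(x⁺) = P(Z > x)`, and let `V` be uniform on `[0,1]` independent of `Z`.
Then `W = P(Z) - V·(P(Z) - P(Z⁺))` is uniformly distributed on `[0,1]`. -/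
theorem distributional_transform_uniform
    {Ω : Type*} [MeasurableSpace Ω] (μ : Measure Ω) [IsProbabilityMeasure μ]
    (Z V : Ω → ℝ) (hZ : Measurable Z) (hV : Measurable V)
    (hVunif : Measure.map V μ = volume.restrict (Set.Icc (0:ℝ) 1))
    (hindep : IndepFun Z V μ) :
    Measure.map (fun ω =>
        (μ {ω' | Z ω ≤ Z ω'}).toReal -
          V ω * ((μ {ω' | Z ω ≤ Z ω'}).toReal - (μ {ω' | Z ω < Z ω'}).toReal)) μ
      = volume.restrict (Set.Icc (0:ℝ) 1) := by
  classical
  set ν : Measure ℝ := Measure.map Z μ with hν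
  haveI : IsProbabilityMeasure ν := Measure.isProbabilityMeasure_map hZ.aemeasurable
  have hFz : ∀ ω, (μ {ω' | Z ω ≤ Z ω'}).toReal = dtF ν (Z ω) := by
    intro ω
    have : {ω' | Z ω ≤ Z ω'} = Z ⁻¹' Set.Ici (Z ω) := rfl
    rw [this, dtF, hν, Measure.map_apply hZ measurableSet_Ici]
  have hGz : ∀ ω, (μ {ω' | Z ω < Z ω'}).toReal = dtG ν (Z ω) := by
    intro ω
    have : {ω' | Z ω < Z ω'} = Z ⁻¹' Set.Ioi (Z ω) := rfl
    rw [this, dtG, hν, Measure.map_apply hZ measurableSet_Ioi]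
  -- the transform as a measurable function of the pair (Z, V)
  set φ : ℝ × ℝ → ℝ := fun p => dtF ν p.1 - p.2 * (dtF ν p.1 - dtG ν p.1) with hφ
  have hφm : Measurable φ := by
    apply Measurable.sub ((dtF_measurable ν).comp measurable_fst)
    exact measurable_snd.mul (((dtF_measurable ν).comp measurable_fst).sub
      ((dtG_measurable ν).comp measurable_fst))
  have hW : (fun ω =>
      (μ {ω' | Z ω ≤ Z ω'}).toReal -
        V ω * ((μ {ω' | Z ω ≤ Z ω'}).toReal - (μ {ω' | Z ω < Z ω'}).toReal))
      = φ ∘ (fun ω => (Z ω, V ω)) := by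
    funext ω; simp [hφ, hFz ω, hGz ω]
  have hpair : Measurable (fun ω => (Z ω, V ω)) := hZ.prodMk hV
  rw [hW, ← Measure.map_map hφm hpair]
  have hprod : Measure.map (fun ω => (Z ω, V ω)) μ
      = ν.prod (volume.restrict (Set.Icc (0:ℝ) 1)) := by
    rw [← hVunif, hν]
    exact (indepFun_iff_map_prod_eq_prod_map_map hZ.aemeasurable hV.aemeasurable).1 hindep
  rw [hprod]
  haveI : IsFiniteMeasure (volume.restrict (Set.Icc (0:ℝ) 1)) := by
    constructor
    rw [Measure.restrict_apply_univ, Real.volume_Icc]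
    simp
  haveI : IsFiniteMeasure ((ν.prod (volume.restrict (Set.Icc (0:ℝ) 1))).map φ) := by
    constructor
    rw [Measure.map_apply hφm MeasurableSet.univ]
    exact lt_of_le_of_lt (measure_mono (Set.subset_univ _)) (measure_lt_top _ _)
  refine MeasureTheory.Measure.ext_of_Iic _ _ (fun t => ?_)
  rw [Measure.map_apply hφm measurableSet_Iic]
  have hsect : (ν.prod (volume.restrict (Set.Icc (0:ℝ) 1))) (φ ⁻¹' Set.Iic t)
      = ∫⁻ z, volume.restrict (Set.Icc (0:ℝ) 1)
          {v : ℝ | dtF ν z - v * (dtF ν z - dtG ν z) ≤ t} ∂ν := by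
    rw [Measure.prod_apply (hφm measurableSet_Iic)]
    rfl
  rw [hsect]
  simp_rw [dt_slice ν]
  exact dt_integral ν t
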